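/- arXiv:2210.05943 — 4 statements merged into one kernel-verified Lean document; each statement's English description precedes it below -/
import Mathlib

section
/- Let n ≥ 3 be an odd integer, p ≥ 2 an integer, and ξ ∈ ℝ with ξ ≠ 0. Define H : ℝ^{p-1} → ℝ by H(η₁, …, η_{p-1}) = ξ^n - η₁^n - ⋯ - η_{p-1}^n - (ξ - η₁ - ⋯ - η_{p-1})^n. Then the gradient ∇H vanishes at (η₁, …, η_{p-1}) if and only if there exists an integer j with 0 ≤ j ≤ p-1 and p - 2j - 2 ≠ 0 such that exactly j of the coordinates η₁, …, η_{p-1} equal -ξ/(p-2j-2) and the remaining p-1-j coordinates equal ξ/(p-2j-2). -/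
open Real

/-- The resonance phase `H(η) = ξⁿ - Σᵢ ηᵢⁿ - (ξ - Σᵢ ηᵢ)ⁿ`. -/
noncomputable def resPhase (n p : ℕ) (ξ : ℝ) (η : Fin (p - 1) → ℝ) : ℝ :=
  ξ ^ n - (∑ i, η i ^ n) - (ξ - ∑ i, η i) ^ n

theorem stationary_points_characterization (n : ℕ) (hn : 3 ≤ n) (hodd : Odd n)
    (p : ℕ) (hp : 2 ≤ p) (ξ : ℝ) (hξ : ξ ≠ 0) (η : Fin (p - 1) → ℝ) :
    fderiv ℝ (resPhase n p ξ) η = 0 ↔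
      ∃ j : ℕ, j ≤ p - 1 ∧ (p : ℤ) - 2 * (j : ℤ) - 2 ≠ 0 ∧
        ∃ s : Finset (Fin (p - 1)), s.card = j ∧
          ∀ i : Fin (p - 1),
            η i = if i ∈ s then -ξ / ((p : ℝ) - 2 * (j : ℝ) - 2)
              else ξ / ((p : ℝ) - 2 * (j : ℝ) - 2) := by
  classical
  set σ : ℝ := ξ - ∑ k, η k with hσdef
  set L : (Fin (p-1) → ℝ) →L[ℝ] ℝ :=
    (0 : (Fin (p-1) → ℝ) →L[ℝ] ℝ)
      - ∑ i, ((n:ℝ) * η i ^ (n-1)) • ContinuousLinearMap.proj i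
      - ((n:ℝ) * σ ^ (n-1)) •
          ((0 : (Fin (p-1) → ℝ) →L[ℝ] ℝ) - ∑ i, ContinuousLinearMap.proj i) with hLdef
  have h2 : HasFDerivAt (fun y : Fin (p-1) → ℝ => ∑ i, y i)
      (∑ i, ContinuousLinearMap.proj (R := ℝ) (φ := fun _ : Fin (p-1) => ℝ) i) η :=
    HasFDerivAt.fun_sum fun i _ => (hasFDerivAt_apply i η)
  have h1 : HasFDerivAt (fun y : Fin (p-1) → ℝ => ∑ i, y i ^ n)
      (∑ i, ((n:ℝ) * η i ^ (n-1)) •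
        ContinuousLinearMap.proj (R := ℝ) (φ := fun _ : Fin (p-1) => ℝ) i) η :=
    HasFDerivAt.fun_sum fun i _ =>
      (hasDerivAt_pow n (η i)).comp_hasFDerivAt η (hasFDerivAt_apply i η)
  have h3 : HasFDerivAt (fun y : Fin (p-1) → ℝ => (ξ - ∑ i, y i) ^ n)
      (((n:ℝ) * σ ^ (n-1)) •
        ((0 : (Fin (p-1) → ℝ) →L[ℝ] ℝ) - ∑ i, ContinuousLinearMap.proj i)) η :=
    (hasDerivAt_pow n (ξ - ∑ i, η i)).comp_hasFDerivAt η ((hasFDerivAt_const ξ η).sub h2)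
  have hD : HasFDerivAt (resPhase n p ξ) L η :=
    ((hasFDerivAt_const (ξ^n) η).sub h1).sub h3
  rw [hD.fderiv]
  have hn0 : (n : ℝ) ≠ 0 := by positivity
  have hLv : ∀ v : Fin (p-1) → ℝ,
      L v = ∑ i, ((n:ℝ) * σ ^ (n-1) - (n:ℝ) * η i ^ (n-1)) * v i := by
    intro v
    simp only [hLdef, ContinuousLinearMap.sub_apply, ContinuousLinearMap.sum_apply,
      ContinuousLinearMap.smul_apply, ContinuousLinearMap.proj_apply,
      ContinuousLinearMap.zero_apply, smul_eq_mul, sub_mul, Finset.sum_sub_distrib,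
      Finset.mul_sum]
    simp only [zero_sub, mul_neg, Finset.mul_sum]
    abel
  have key : L = 0 ↔ ∀ i, η i ^ (n-1) = σ ^ (n-1) := by
    constructor
    · intro h i
      have h0 : L (Pi.single i 1) = 0 := by rw [h]; rfl
      rw [hLv] at h0
      simp only [Pi.single_apply, mul_ite, mul_one, mul_zero,
        Finset.sum_ite_eq', Finset.mem_univ, if_true] at h0
      have := sub_eq_zero.mp h0
      exact mul_left_cancel₀ hn0 this.symm
    · intro h
      ext v
      rw [hLv]
      simp [h]
  rw [key]
  -- now the algebraic characterization
  have hk0 : n - 1 ≠ 0 := by omega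
  have hke : Even (n - 1) := by
    rcases hodd with ⟨m, hm⟩
    exact ⟨m, by omega⟩
  have hpm : ∀ x : ℝ, x ^ (n-1) = σ ^ (n-1) ↔ (x = σ ∨ x = -σ) := by
    intro x
    rw [← hke.pow_abs x, ← hke.pow_abs σ,
      pow_left_inj₀ (abs_nonneg _) (abs_nonneg _) hk0, abs_eq_abs]
  have hcard : Fintype.card (Fin (p-1)) = p - 1 := Fintype.card_fin _
  constructor
  · intro h
    have hall : ∀ i, η i = σ ∨ η i = -σ := fun i => (hpm (η i)).mp (h i)
    have hσ0 : σ ≠ 0 := by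
      intro h0
      have : ∀ i, η i = 0 := by
        intro i; rcases hall i with h' | h' <;> simp [h', h0]
      have hsum : (∑ k, η k) = 0 := Finset.sum_eq_zero fun i _ => this i
      rw [hσdef, hsum, sub_zero] at h0
      exact hξ h0
    set s : Finset (Fin (p-1)) := Finset.univ.filter (fun i => η i = σ) with hsdef
    set j : ℕ := s.card with hjdef
    have hjle : j ≤ p - 1 := by
      calc j ≤ Fintype.card (Fin (p-1)) := Finset.card_le_univ s
      _ = p - 1 := hcard
    have hmem : ∀ i, i ∈ s ↔ η i = σ := by
      intro i; simp [hsdef]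
    have hcompl : sᶜ.card = (p - 1) - j := by
      rw [Finset.card_compl, hcard]
    have hsum : (∑ k, η k) = (j : ℝ) * σ + (((p-1) - j : ℕ) : ℝ) * (-σ) := by
      rw [← Finset.sum_add_sum_compl s]
      congr 1
      · rw [Finset.sum_congr rfl (fun i hi => (hmem i).mp hi), Finset.sum_const,
          nsmul_eq_mul]
      · rw [Finset.sum_congr rfl (fun i hi => ?_), Finset.sum_const, nsmul_eq_mul, hcompl]
        rcases hall i with h' | h'
        · exact absurd ((hmem i).mpr h') (Finset.mem_compl.mp hi)
        · exact h'
    have hcast : (((p-1) - j : ℕ) : ℝ) = (p : ℝ) - 1 - j := by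
      have : (p - 1) - j + j + 1 = p := by omega
      have := congrArg (fun x : ℕ => (x : ℝ)) this
      push_cast at this
      linarith
    have hsum' : (∑ k, η k) = (j : ℝ) * σ + ((p : ℝ) - 1 - (j:ℝ)) * (-σ) := by
      rw [hsum, hcast]
    have hxi : ξ = -((p : ℝ) - 2 * (j : ℝ) - 2) * σ := by
      linear_combination -hσdef + hsum'
    have hc0 : ((p : ℝ) - 2 * (j : ℝ) - 2) ≠ 0 := by
      intro h0
      rw [h0] at hxi
      simp at hxi
      exact hξ hxi
    refine ⟨j, hjle, ?_, s, rfl, ?_⟩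
    · intro h0
      apply hc0
      have := congrArg (fun x : ℤ => (x : ℝ)) h0
      push_cast at this
      linarith
    · intro i
      have hσval : σ = -ξ / ((p : ℝ) - 2 * (j : ℝ) - 2) := by
        field_simp
        linarith [hxi]
      by_cases hi : i ∈ s
      · rw [if_pos hi, ← hσval]; exact (hmem i).mp hi
      · rw [if_neg hi]
        rcases hall i with h' | h'
        · exact absurd ((hmem i).mpr h') hi
        · rw [h', hσval]; ring
  · rintro ⟨j, hjle, hcz, s, hcard_s, hval⟩
    have hcastc : ((p : ℝ) - 2 * (j:ℝ) - 2) = (((p : ℤ) - 2 * (j:ℤ) - 2 : ℤ) : ℝ) := by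
      push_cast; ring
    have hc0 : ((p : ℝ) - 2 * (j : ℝ) - 2) ≠ 0 := by
      rw [hcastc]
      exact_mod_cast hcz
    set c : ℝ := (p : ℝ) - 2 * (j : ℝ) - 2 with hcdef
    have hcompl : sᶜ.card = (p - 1) - j := by
      rw [Finset.card_compl, hcard, hcard_s]
    have hcast : (((p-1) - j : ℕ) : ℝ) = (p : ℝ) - 1 - j := by
      have h1 : (p - 1) - j + j + 1 = p := by omega
      have := congrArg (fun x : ℕ => (x : ℝ)) h1
      push_cast at this
      linarith
    have hsum : (∑ k, η k) = (j : ℝ) * (-ξ / c) + ((p : ℝ) - 1 - j) * (ξ / c) := by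
      rw [← Finset.sum_add_sum_compl s]
      congr 1
      · rw [Finset.sum_congr rfl (fun i hi => by rw [hval i, if_pos hi]),
          Finset.sum_const, nsmul_eq_mul, hcard_s]
      · rw [Finset.sum_congr rfl
            (fun i hi => by rw [hval i, if_neg (Finset.mem_compl.mp hi)]),
          Finset.sum_const, nsmul_eq_mul, hcompl, hcast]
    have hσval : σ = -ξ / c := by
      rw [hσdef, hsum]
      field_simp
      ring
    intro i
    rw [hpm]
    rw [hval i]
    by_cases hi : i ∈ s
    · rw [if_pos hi, hσval]; left; rfl
    · rw [if_neg hi, hσval]; right; ring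
end

section
/- Let p ≥ 3 be an odd integer and let M₁ be the (p-1)×(p-1) real symmetric matrix with diagonal entries (M₁)ᵢᵢ = 2 for 1 ≤ i ≤ (p-1)/2, (M₁)ᵢᵢ = 0 for (p-1)/2 < i ≤ p-1, and off-diagonal entries (M₁)ᵢ_k = 1 for all i ≠ k. Then M₁ has exactly (p-1)/2 positive eigenvalues and exactly (p-1)/2 negative eigenvalues (counted with multiplicity); in particular the signature of M₁ is 0. -/
open Polynomial

/-- The matrix `M₁`: diagonal entries `2` in the first `(p-1)/2` slots, `0` afterwards,
and off-diagonal entries all `1`. -/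
noncomputable def Mone (p : ℕ) : Matrix (Fin (p - 1)) (Fin (p - 1)) ℝ :=
  Matrix.of fun i k => if i = k then (if (i : ℕ) < (p - 1) / 2 then (2 : ℝ) else 0) else 1

section Aux
open Matrix Finset

lemma eval_charpoly_aux {n : ℕ} (M : Matrix (Fin n) (Fin n) ℝ) (x : ℝ) :
    M.charpoly.eval x = (Matrix.of fun i j => (if i = j then x else 0) - M i j).det := by
  rw [Matrix.charpoly, ← Polynomial.coe_evalRingHom, RingHom.map_det]
  congr 1
  ext i j
  by_cases h : i = j <;> simp [h, charmatrix_apply_eq, charmatrix_apply_ne, Matrix.map_apply]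


lemma filter_lt_card (m : ℕ) :
    ((Finset.range (2*m)).filter (fun i => i < m)).card = m := by
  have : (Finset.range (2*m)).filter (fun i => i < m) = Finset.range m := by
    ext i; simp; omega
  rw [this, Finset.card_range]

lemma filter_not_lt_card (m : ℕ) :
    ((Finset.range (2*m)).filter (fun i => ¬ i < m)).card = m := by
  have : (Finset.range (2*m)).filter (fun i => ¬ i < m) = Finset.Ico m (2*m) := by
    ext i; simp; omega
  rw [this, Nat.card_Ico]; omega

lemma det_key (k n : ℕ) (hn : n = 2*(k+1)) (x : ℝ) (h1 : x ≠ 1) (h2 : x ≠ -1) :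
    (Matrix.of fun i j : Fin n =>
        (if i = j then x else 0) - (if i = j then (if (i:ℕ) < (k+1) then (2:ℝ) else 0) else 1)).det
      = (x-1)^k * (x+1)^k * (x^2 - 2*(k+1)*x - 1) := by
  subst hn
  set m := k + 1 with hm
  set d : Fin (2*m) → ℝ := fun i => if (i:ℕ) < m then x - 1 else x + 1 with hd
  have hd1 : x - 1 ≠ 0 := sub_ne_zero.mpr h1
  have hd2 : x + 1 ≠ 0 := by intro h; apply h2; linarith [h]
  have hdne : ∀ i, d i ≠ 0 := by intro i; dsimp [d]; split <;> assumption
  have hsplit : (Matrix.of fun i j : Fin (2*m) =>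
        (if i = j then x else 0) - (if i = j then (if (i:ℕ) < m then (2:ℝ) else 0) else 1))
      = Matrix.diagonal d + Matrix.replicateCol Unit (fun _ => (1:ℝ)) * Matrix.replicateRow Unit (fun _ => (-1:ℝ)) := by
    ext i j
    by_cases h : i = j
    · subst h
      simp [Matrix.mul_apply, Matrix.diagonal, d]
      split <;> ring
    · simp [Matrix.mul_apply, Matrix.diagonal_apply_ne _ h, h]
  rw [hsplit]
  have hA : IsUnit (Matrix.diagonal d).det := by
    rw [Matrix.det_diagonal]
    exact isUnit_iff_ne_zero.mpr (Finset.prod_ne_zero_iff.mpr fun i _ => hdne i)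
  have hdet : (Matrix.diagonal d).det = (x-1)^m * (x+1)^m := by
    rw [Matrix.det_diagonal]
    rw [Fin.prod_univ_eq_prod_range (fun i => if i < m then x - 1 else x + 1) (2*m)]
    rw [Finset.prod_ite, Finset.prod_const, Finset.prod_const, filter_lt_card, filter_not_lt_card]
  have hinv : (Matrix.diagonal d)⁻¹ = Matrix.diagonal (fun i => (d i)⁻¹) := by
    apply Matrix.inv_eq_right_inv
    rw [Matrix.diagonal_mul_diagonal]
    have : (fun i => d i * (d i)⁻¹) = fun _ => (1:ℝ) := _root_.funext fun i => mul_inv_cancel₀ (hdne i)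
    rw [this, Matrix.diagonal_one]
  have hentry : ((Matrix.replicateRow Unit (fun _ : Fin (2*m) => (-1:ℝ)) * (Matrix.diagonal d)⁻¹) *
      Matrix.replicateCol Unit (fun _ : Fin (2*m) => (1:ℝ)))
      = Matrix.of (fun _ _ : Unit => -((m:ℝ) * (x-1)⁻¹ + m * (x+1)⁻¹)) := by
    rw [hinv]
    ext _ _
    rw [Matrix.of_apply]
    simp only [Matrix.mul_apply, Matrix.replicateRow_apply, Matrix.replicateCol_apply, Matrix.diagonal_apply,
      mul_ite, mul_zero, Finset.sum_ite_eq, Finset.sum_ite_eq', Finset.mem_univ, if_true, mul_one,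
      Finset.univ_unique, Finset.sum_singleton]
    have : ∀ j : Fin (2*m), (-1 : ℝ) * (d j)⁻¹ = -((d j)⁻¹) := fun j => by ring
    rw [Finset.sum_congr rfl fun j _ => this j, Finset.sum_neg_distrib]
    congr 1
    rw [Fin.sum_univ_eq_sum_range (fun i => (if i < m then x - 1 else x + 1)⁻¹) (2*m)]
    have : ∀ i ∈ Finset.range (2*m), (if i < m then x - 1 else x + 1)⁻¹
        = if i < m then (x-1)⁻¹ else (x+1)⁻¹ := by intro i _; split <;> rfl
    rw [Finset.sum_congr rfl this, Finset.sum_ite, Finset.sum_const, Finset.sum_const,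
      filter_lt_card, filter_not_lt_card]
    push_cast; ring
  rw [Matrix.det_add_replicateCol_mul_replicateRow hA, hdet, hentry, Matrix.det_unique, Matrix.add_apply,
    Matrix.one_apply_eq, Matrix.of_apply]
  have hmk : (m : ℝ) = k + 1 := by push_cast [hm]; ring
  rw [hm, pow_succ, pow_succ]
  field_simp
  push_cast
  ring

end Aux

lemma charpoly_Mone (p k : ℕ) (hk : p - 1 = 2*(k+1)) :
    (Mone p).charpoly = (X - C 1)^k * (X - C (-1))^k *
      ((X - C ((k+1) + Real.sqrt (((k:ℝ)+1)^2+1))) * (X - C ((k+1) - Real.sqrt (((k:ℝ)+1)^2+1)))) := by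
  have hhalf : (p - 1) / 2 = k + 1 := by omega
  have hs : Real.sqrt (((k:ℝ)+1)^2+1)^2 = ((k:ℝ)+1)^2+1 := Real.sq_sqrt (by positivity)
  apply Polynomial.eq_of_infinite_eval_eq
  apply Set.Infinite.mono (h := fun x (hx : x ∈ ({1, -1} : Set ℝ)ᶜ) => ?_)
  · exact Set.Finite.infinite_compl (Set.toFinite {1, -1})
  · simp only [Set.mem_compl_iff, Set.mem_insert_iff, Set.mem_singleton_iff, not_or] at hx
    obtain ⟨h1, h2⟩ := hx
    have lhs : (Mone p).charpoly.eval x = (x-1)^k * (x+1)^k * (x^2 - 2*(k+1)*x - 1) := by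
      rw [eval_charpoly_aux]
      rw [← det_key k (p-1) hk x h1 h2]
      congr 1
      ext i j
      simp only [Matrix.of_apply, Mone, hhalf]
    simp only [Set.mem_setOf_eq, lhs, eval_mul, eval_pow, eval_sub, eval_X, eval_C]
    have : (x - ((k:ℝ)+1 + Real.sqrt (((k:ℝ)+1)^2+1))) * (x - ((k:ℝ)+1 - Real.sqrt (((k:ℝ)+1)^2+1)))
        = x^2 - 2*((k:ℝ)+1)*x - 1 := by linear_combination -hs
    rw [this]
    ring

theorem Mone_signature_zero (p : ℕ) (hp : 3 ≤ p) (hpodd : Odd p) :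
    Multiset.card ((Mone p).charpoly.roots.filter fun x => 0 < x) = (p - 1) / 2 ∧
      Multiset.card ((Mone p).charpoly.roots.filter fun x => x < 0) = (p - 1) / 2 := by
  obtain ⟨t, ht⟩ := hpodd
  obtain ⟨k, hk⟩ : ∃ k, p - 1 = 2*(k+1) := ⟨t-1, by omega⟩
  have hhalf : (p - 1) / 2 = k + 1 := by omega
  set s := Real.sqrt (((k:ℝ)+1)^2+1) with hsdef
  have hs : s^2 = ((k:ℝ)+1)^2+1 := Real.sq_sqrt (by positivity)
  have hrpos : (0:ℝ) < (k+1) + s := by positivity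
  have hsneg : ((k:ℝ)+1) - s < 0 := by
    have : ((k:ℝ)+1) < s := by
      rw [hsdef]
      rw [show ((k:ℝ)+1)^2+1 = ((k:ℝ)+1)^2+1 from rfl]
      exact (Real.lt_sqrt (by positivity)).mpr (by nlinarith)
    linarith
  rw [charpoly_Mone p k hk]
  have hX : ∀ a : ℝ, (X - C a) ≠ (0 : ℝ[X]) := fun a => X_sub_C_ne_zero a
  rw [Polynomial.roots_mul (mul_ne_zero (mul_ne_zero (pow_ne_zero _ (hX 1)) (pow_ne_zero _ (hX (-1)))) (mul_ne_zero (hX _) (hX _))),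
    Polynomial.roots_mul (mul_ne_zero (pow_ne_zero _ (hX 1)) (pow_ne_zero _ (hX (-1)))),
    Polynomial.roots_mul (mul_ne_zero (hX _) (hX _)),
    roots_pow, roots_pow, roots_X_sub_C, roots_X_sub_C, roots_X_sub_C, roots_X_sub_C,
    Multiset.nsmul_singleton, Multiset.nsmul_singleton]
  have e1 : Multiset.filter (fun x => 0 < x) (Multiset.replicate k (1:ℝ)) = Multiset.replicate k 1 :=
    Multiset.filter_eq_self.mpr fun a ha => by rw [Multiset.eq_of_mem_replicate ha]; norm_num
  have e2 : Multiset.filter (fun x => 0 < x) (Multiset.replicate k (-1:ℝ)) = 0 :=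
    Multiset.filter_eq_nil.mpr fun a ha => by rw [Multiset.eq_of_mem_replicate ha]; norm_num
  have e3 : Multiset.filter (fun x => x < 0) (Multiset.replicate k (1:ℝ)) = 0 :=
    Multiset.filter_eq_nil.mpr fun a ha => by rw [Multiset.eq_of_mem_replicate ha]; norm_num
  have e4 : Multiset.filter (fun x => x < 0) (Multiset.replicate k (-1:ℝ)) = Multiset.replicate k (-1) :=
    Multiset.filter_eq_self.mpr fun a ha => by rw [Multiset.eq_of_mem_replicate ha]; norm_num
  constructor
  · simp only [Multiset.filter_add, Multiset.card_add, Multiset.filter_singleton, e1, e2]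
    rw [if_pos hrpos, if_neg (not_lt.mpr (le_of_lt hsneg))]
    simp [Multiset.card_replicate]
    omega
  · simp only [Multiset.filter_add, Multiset.card_add, Multiset.filter_singleton, e3, e4]
    rw [if_neg (not_lt.mpr (le_of_lt hrpos)), if_pos hsneg]
    simp [Multiset.card_replicate]
    omega
end

section
/- Let p ≥ 3 be an odd integer and let M₁ be the (p-1)×(p-1) real symmetric matrix with diagonal entries (M₁)ᵢᵢ = 2 for 1 ≤ i ≤ (p-1)/2, (M₁)ᵢᵢ = 0 for (p-1)/2 < i ≤ p-1, and off-diagonal entries (M₁)ᵢ_k = 1 for all i ≠ k. Then the characteristic polynomial of M₁ is (X+1)^{(p-3)/2} (X-1)^{(p-3)/2} (X² - (p-1)X - 1) in ℝ[X]. In particular, -1 and 1 are eigenvalues of M₁ each with multiplicity (p-3)/2, and the remaining two eigenvalues are the two real roots of t² - (p-1)t - 1 = 0, which have opposite signs. -/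
open Polynomial


lemma card_filter_fin_lt (n m : ℕ) (hm : m ≤ n) :
    (Finset.univ.filter fun i : Fin n => (i : ℕ) < m).card = m := by
  rw [← Finset.card_map Fin.valEmbedding]
  rw [show (Finset.univ.filter fun i : Fin n => (i : ℕ) < m).map Fin.valEmbedding
      = Finset.range m from ?_, Finset.card_range]
  ext j
  simp only [Finset.mem_map, Finset.mem_filter, Finset.mem_univ, true_and,
    Fin.valEmbedding_apply, Finset.mem_range]
  constructor
  · rintro ⟨i, hi, rfl⟩; exact hi
  · intro hj; exact ⟨⟨j, lt_of_lt_of_le hj hm⟩, hj, rfl⟩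

lemma det_diag_add_rankone {n : ℕ} (u v : Fin n → ℝ) (d : Fin n → ℝ) (hd : ∀ i, d i ≠ 0) :
    (Matrix.diagonal d + Matrix.replicateCol Unit u * Matrix.replicateRow Unit v).det
      = (∏ i, d i) * (1 + ∑ i, v i * (d i)⁻¹ * u i) := by
  have hdet : IsUnit (Matrix.diagonal d).det := by
    rw [Matrix.det_diagonal]; exact (Finset.prod_ne_zero_iff.mpr fun i _ => hd i).isUnit
  have hinv : (Matrix.diagonal d)⁻¹ = Matrix.diagonal (fun i => (d i)⁻¹) :=
    Matrix.inv_eq_right_inv (by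
      rw [Matrix.diagonal_mul_diagonal]
      convert Matrix.diagonal_one with i
      exact mul_inv_cancel₀ (hd i))
  rw [Matrix.det_add_replicateCol_mul_replicateRow hdet, Matrix.det_diagonal]
  congr 1
  rw [Matrix.det_unique, hinv]
  simp [Matrix.mul_apply, Finset.mul_sum,
    Finset.sum_mul, Matrix.diagonal_apply, ite_mul, mul_ite, mul_zero, zero_mul,
    Finset.sum_ite_eq, Finset.sum_ite_eq']

lemma eval_charpoly {n : ℕ} (M : Matrix (Fin n) (Fin n) ℝ) (x : ℝ) :
    eval x M.charpoly = ((Matrix.charmatrix M).map (eval x)).det := by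
  rw [Matrix.charpoly, ← Polynomial.coe_evalRingHom, RingHom.map_det, RingHom.mapMatrix_apply]

theorem Mone_charpoly (p : ℕ) (hp : 3 ≤ p) (hpodd : Odd p) :
    (Mone p).charpoly =
        (X + 1) ^ ((p - 3) / 2) * (X - 1) ^ ((p - 3) / 2) *
          (X ^ 2 - C ((p : ℝ) - 1) * X - 1) ∧
      ∃ t₁ t₂ : ℝ, t₁ < 0 ∧ 0 < t₂ ∧
        t₁ ^ 2 - ((p : ℝ) - 1) * t₁ - 1 = 0 ∧ t₂ ^ 2 - ((p : ℝ) - 1) * t₂ - 1 = 0 := by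
  obtain ⟨a, ha⟩ := hpodd
  have ha1 : 1 ≤ a := by omega
  obtain ⟨k, rfl⟩ : ∃ k, a = k + 1 := ⟨a - 1, by omega⟩
  have hp1 : p - 1 = 2 * k + 2 := by omega
  have hm : (p - 1) / 2 = k + 1 := by omega
  have hk3 : (p - 3) / 2 = k := by omega
  have hpr : (p : ℝ) = 2 * k + 3 := by
    subst ha; push_cast; ring
  constructor
  · apply Polynomial.eq_of_infinite_eval_eq
    apply Set.Infinite.mono (s := {x : ℝ | x ≠ 1 ∧ x ≠ -1})
    swap
    · have : ({1, -1} : Set ℝ)ᶜ ⊆ {x : ℝ | x ≠ 1 ∧ x ≠ -1} := by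
        intro x hx; simp only [Set.mem_compl_iff, Set.mem_insert_iff,
          Set.mem_singleton_iff, not_or] at hx; exact hx
      exact Set.Infinite.mono this ((Set.toFinite ({1, -1} : Set ℝ)).infinite_compl)
    intro x ⟨hx1, hx2⟩
    have hx1' : x - 1 ≠ 0 := sub_ne_zero.mpr hx1
    have hx2' : x + 1 ≠ 0 := by
      intro h; apply hx2; linarith
    simp only [Set.mem_setOf_eq]
    rw [eval_charpoly]
    set d : Fin (p - 1) → ℝ := fun i => if (i : ℕ) < (p - 1) / 2 then x - 1 else x + 1 with hd
    have hdne : ∀ i, d i ≠ 0 := by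
      intro i; rw [hd]; dsimp only; split_ifs <;> assumption
    have hmap : (Matrix.charmatrix (Mone p)).map (eval x)
        = Matrix.diagonal d + Matrix.replicateCol Unit (fun _ => (-1 : ℝ)) * Matrix.replicateRow Unit (fun _ => (1 : ℝ)) := by
      ext i j
      by_cases h : i = j
      · subst h
        simp only [Matrix.map_apply, Matrix.charmatrix_apply_eq, eval_sub, eval_X, eval_C,
          Matrix.add_apply, Matrix.diagonal_apply_eq, Matrix.mul_apply, Matrix.replicateCol_apply,
          Matrix.replicateRow_apply, Mone, Matrix.of_apply, if_pos rfl, Finset.sum_const,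
          Finset.card_univ, Fintype.card_unit, one_smul, hd]
        split_ifs <;> ring
      · simp only [Matrix.map_apply, Matrix.charmatrix_apply_ne _ _ _ h, eval_neg, eval_C,
          Matrix.add_apply, Matrix.diagonal_apply_ne _ h, Matrix.mul_apply, Matrix.replicateCol_apply,
          Matrix.replicateRow_apply, Mone, Matrix.of_apply, if_neg h, Finset.sum_const,
          Finset.card_univ, Fintype.card_unit, one_smul]
        ring
    rw [hmap, det_diag_add_rankone _ _ _ hdne]
    have hcard1 : (Finset.univ.filter fun i : Fin (p - 1) => (i : ℕ) < (p - 1) / 2).card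
        = k + 1 := by rw [card_filter_fin_lt _ _ (by omega)]; exact hm
    have hcard2 : (Finset.univ.filter fun i : Fin (p - 1) => (p - 1) / 2 ≤ (i : ℕ)).card
        = k + 1 := by
      have h := Finset.card_filter_add_card_filter_not (s := (Finset.univ : Finset (Fin (p-1))))
        (p := fun i : Fin (p - 1) => (i : ℕ) < (p - 1) / 2)
      simp only [not_lt] at h
      rw [Finset.card_univ, Fintype.card_fin, hcard1] at h
      omega
    have hprod : (∏ i, d i) = (x - 1) ^ (k + 1) * (x + 1) ^ (k + 1) := by
      rw [hd]; rw [Finset.prod_ite]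
      simp [hcard1, hcard2]
    have hsum : (∑ i, (1 : ℝ) * (d i)⁻¹ * (-1))
        = -((k + 1 : ℝ) * (x - 1)⁻¹ + (k + 1 : ℝ) * (x + 1)⁻¹) := by
      rw [hd]
      simp only [one_mul, mul_neg, mul_one, Finset.sum_neg_distrib]
      rw [show (fun i : Fin (p-1) => (if (i : ℕ) < (p - 1) / 2 then x - 1 else x + 1)⁻¹)
          = fun i : Fin (p-1) => (if (i : ℕ) < (p - 1) / 2 then (x - 1)⁻¹ else (x + 1)⁻¹) from
          funext fun i => apply_ite Inv.inv _ _ _]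
      rw [Finset.sum_ite]
      simp [hcard1, hcard2]
    rw [hprod, hsum, hk3]
    simp only [eval_mul, eval_pow, eval_add, eval_sub, eval_X, eval_one, eval_C, hpr]
    rw [pow_succ, pow_succ]
    field_simp
    ring
  · have h3 : (3 : ℝ) ≤ (p : ℝ) := by exact_mod_cast hp
    set s : ℝ := Real.sqrt (((p : ℝ) - 1) ^ 2 + 4) with hsdef
    have hs : s ^ 2 = ((p : ℝ) - 1) ^ 2 + 4 :=
      Real.sq_sqrt (by positivity)
    have hs0 : 0 ≤ s := Real.sqrt_nonneg _
    have hsgt : (p : ℝ) - 1 < s := by nlinarith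
    refine ⟨((p : ℝ) - 1 - s) / 2, ((p : ℝ) - 1 + s) / 2, by nlinarith, by nlinarith, ?_, ?_⟩
    · nlinarith
    · nlinarith
end

section
/- Weighted L¹ interpolation bound: for every ρ with 0 ≤ ρ < 1/4 there is a constant C = C(ρ) such that for every Schwartz function f : ℝ → ℂ, ∫_ℝ |x|^{2ρ} |f(x)| dx ≤ C ‖f‖_{L²(ℝ)}^{1/2 - 2ρ} ‖x f(x)‖_{L²(ℝ)}^{1/2 + 2ρ}. -/
open MeasureTheory Real Set

lemma sq_rpow (a c : ℝ) (ha : 0 ≤ a) : (a ^ c) ^ (2:ℕ) = a ^ (2 * c) := by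
  rw [← Real.rpow_natCast (a ^ c) 2, ← Real.rpow_mul ha]
  norm_num
  rw [mul_comm]



lemma Icc_compl_eq (R : ℝ) : (Set.Icc (-R) R)ᶜ = Set.Iio (-R) ∪ Set.Ioi R := by
  ext x
  rw [Set.mem_compl_iff, Set.mem_Icc, not_and_or, not_le, not_le]
  simp [Set.mem_union]

lemma tail_integrable {c R : ℝ} (hc : c < -1) (hR : 0 < R) :
    IntegrableOn (fun x : ℝ => |x| ^ c) (Set.Icc (-R) R)ᶜ := by
  have hIoi : IntegrableOn (fun x : ℝ => |x| ^ c) (Set.Ioi R) :=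
    (integrableOn_Ioi_rpow_of_lt hc hR).congr_fun
      (fun x hx => by show x ^ c = |x| ^ c; rw [abs_of_pos (hR.trans hx)]) measurableSet_Ioi
  rw [Icc_compl_eq]
  apply IntegrableOn.union _ hIoi
  have h1 : IntegrableOn (fun x : ℝ => |x| ^ c) (Set.Iic (-R)) := by
    rw [← Measure.map_neg_eq_self (volume : Measure ℝ)]
    have m : MeasurableEmbedding fun x : ℝ => -x :=
      (Homeomorph.neg ℝ).measurableEmbedding
    rw [m.integrableOn_map_iff]
    have : ((fun x : ℝ => |x| ^ c) ∘ fun x : ℝ => -x) = fun x : ℝ => |x| ^ c := by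
      ext x; simp [abs_neg]
    rw [this, Set.neg_preimage, Set.neg_Iic, neg_neg,
      integrableOn_Ici_iff_integrableOn_Ioi]
    exact hIoi
  exact h1.mono_set Set.Iio_subset_Iic_self

lemma tail_integral {c R : ℝ} (hc : c < -1) (hR : 0 < R) :
    ∫ x in (Set.Icc (-R) R)ᶜ, |x| ^ c = 2 * (R ^ (c + 1) / -(c + 1)) := by
  have hIoi : ∫ x in Set.Ioi R, |x| ^ c = R ^ (c + 1) / -(c + 1) := by
    rw [setIntegral_congr_fun measurableSet_Ioi
      (fun x hx => by rw [abs_of_pos (hR.trans hx)]), integral_Ioi_rpow_of_lt hc hR,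
      div_neg, neg_div]
  have hIio : ∫ x in Set.Iio (-R), |x| ^ c = R ^ (c + 1) / -(c + 1) := by
    calc ∫ x in Set.Iio (-R), |x| ^ c = ∫ x in Set.Iic (-R), |x| ^ c := by
          rw [Measure.restrict_congr_set Iio_ae_eq_Iic]
      _ = ∫ x in Set.Ioi R, |x| ^ c := by
          have := integral_comp_neg_Iic (-R) (fun y : ℝ => |y| ^ c)
          simpa [abs_neg] using this
      _ = _ := hIoi
  rw [Icc_compl_eq, setIntegral_union (by
      apply Set.disjoint_left.mpr
      intro x hx hx2
      simp only [Set.mem_Iio, Set.mem_Ioi] at hx hx2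
      linarith) measurableSet_Ioi
      (((tail_integrable hc hR).mono_set (by rw [Icc_compl_eq]; exact Set.subset_union_left)))
      (((tail_integrable hc hR).mono_set (by rw [Icc_compl_eq]; exact Set.subset_union_right))),
    hIoi, hIio]
  ring


lemma head_integrable {c R : ℝ} (hc : 0 ≤ c) (hR : 0 < R) :
    IntegrableOn (fun x : ℝ => |x| ^ c) (Set.Icc (-R) R) :=
  (continuous_abs.rpow_const (fun x => Or.inr hc)).integrableOn_Icc

lemma head_integral_le {c R : ℝ} (hc : 0 ≤ c) (hR : 0 < R) :
    ∫ x in Set.Icc (-R) R, |x| ^ c ≤ 2 * R ^ (c + 1) := by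
  have h1 : ∫ x in Set.Icc (-R) R, |x| ^ c ≤ ∫ _x in Set.Icc (-R) R, R ^ c := by
    apply setIntegral_mono_on (head_integrable hc hR) ((integrableOn_const_iff (C := R ^ c) enorm_ne_top).mpr (Or.inr (by
      rw [Real.volume_Icc]; exact ENNReal.ofReal_lt_top))) measurableSet_Icc
    intro x hx
    rw [Set.mem_Icc] at hx
    exact Real.rpow_le_rpow (abs_nonneg x) (abs_le.mpr hx) hc
  calc ∫ x in Set.Icc (-R) R, |x| ^ c ≤ ∫ _x in Set.Icc (-R) R, R ^ c := h1
    _ = (2 * R) * R ^ c := by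
        rw [setIntegral_const, Real.volume_real_Icc_of_le (by linarith), smul_eq_mul]
        ring
    _ = 2 * R ^ (c + 1) := by rw [Real.rpow_add_one hR.ne']; ring

lemma cauchy_schwarz_int {μ : Measure ℝ} {w g : ℝ → ℝ}
    (hw0 : 0 ≤ w) (hg0 : 0 ≤ g) (hw : MemLp w 2 μ) (hg : MemLp g 2 μ) :
    ∫ x, w x * g x ∂μ ≤ (∫ x, w x ^ 2 ∂μ) ^ ((1:ℝ)/2) * (∫ x, g x ^ 2 ∂μ) ^ ((1:ℝ)/2) := by
  have hpq : (2:ℝ).HolderConjugate 2 := Real.HolderConjugate.two_two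
  have h2 : ENNReal.ofReal (2:ℝ) = 2 := by norm_num
  have := integral_mul_le_Lp_mul_Lq_of_nonneg hpq (Filter.Eventually.of_forall hw0)
    (Filter.Eventually.of_forall hg0) (h2 ▸ hw) (h2 ▸ hg)
  calc ∫ x, w x * g x ∂μ ≤ (∫ x, w x ^ (2:ℝ) ∂μ) ^ (1/(2:ℝ)) * (∫ x, g x ^ (2:ℝ) ∂μ) ^ (1/(2:ℝ)) :=
        this
    _ = _ := by norm_num [Real.rpow_natCast]

theorem weighted_L1_interpolation_aux (ρ : ℝ) (hρ0 : 0 ≤ ρ) (hρ1 : ρ < 1 / 4)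
    (f : SchwartzMap ℝ ℂ) (hf0 : ∃ x : ℝ, f x ≠ 0) :
    (∫ x : ℝ, |x| ^ (2 * ρ) * ‖f x‖) ≤
      ((2:ℝ) ^ ((1:ℝ)/2) + (2 / (1 - 4*ρ)) ^ ((1:ℝ)/2)) *
        ((∫ x : ℝ, ‖f x‖ ^ 2) ^ ((1 : ℝ) / 2)) ^ ((1 : ℝ) / 2 - 2 * ρ) *
          ((∫ x : ℝ, ‖(x : ℂ) * f x‖ ^ 2) ^ ((1 : ℝ) / 2)) ^ ((1 : ℝ) / 2 + 2 * ρ) := by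
  obtain ⟨x₀, hx₀⟩ := hf0
  obtain ⟨M, hM0, hM⟩ := f.decay 0 0
  have hMf : ∀ x : ℝ, ‖f x‖ ≤ M := by
    intro x
    have := hM x
    simpa [norm_iteratedFDeriv_zero] using this
  have hnorm : ∀ x : ℝ, ‖(x : ℂ) * f x‖ = |x| * ‖f x‖ := fun x => by
    rw [norm_mul, Complex.norm_real, Real.norm_eq_abs]
  -- integrability of squares
  have IA : Integrable (fun x : ℝ => ‖f x‖ ^ 2) := by
    apply Integrable.mono' ((f.integrable (μ := volume)).norm.const_mul M)
      (f.continuous.norm.pow 2).aestronglyMeasurable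
    refine Filter.Eventually.of_forall fun x => ?_
    simp only [Pi.pow_apply, Pi.mul_apply]
    rw [Real.norm_eq_abs, abs_of_nonneg (by positivity)]
    calc ‖f x‖ ^ 2 = ‖f x‖ * ‖f x‖ := sq ‖f x‖ ▸ rfl
      _ ≤ M * ‖f x‖ := mul_le_mul_of_nonneg_right (hMf x) (norm_nonneg _)
  have IB : Integrable (fun x : ℝ => ‖(x : ℂ) * f x‖ ^ 2) := by
    apply Integrable.mono' ((f.integrable_pow_mul volume 2).const_mul M)
      (((Complex.continuous_ofReal.mul f.continuous).norm.pow 2)).aestronglyMeasurable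
    refine Filter.Eventually.of_forall fun x => ?_
    simp only [Pi.pow_apply, Pi.mul_apply]
    rw [Real.norm_eq_abs, abs_of_nonneg (by positivity), hnorm x]
    have h1 : (|x| * ‖f x‖) ^ 2 = |x| ^ 2 * (‖f x‖ * ‖f x‖) := by ring
    rw [h1]
    have h2 : ‖f x‖ * ‖f x‖ ≤ M * ‖f x‖ := mul_le_mul_of_nonneg_right (hMf x) (norm_nonneg _)
    calc |x| ^ 2 * (‖f x‖ * ‖f x‖) ≤ |x| ^ 2 * (M * ‖f x‖) := by
          apply mul_le_mul_of_nonneg_left h2 (by positivity)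
      _ = M * (‖x‖ ^ 2 * ‖f x‖) := by rw [Real.norm_eq_abs]; ring
  have IB' : Integrable (fun x : ℝ => (|x| * ‖f x‖) ^ 2) := by
    simpa only [hnorm] using IB
  -- positivity of the two L² integrals
  have hUopen : IsOpen {x : ℝ | f x ≠ 0} :=
    isOpen_compl_singleton.preimage f.continuous
  have hA2 : 0 < ∫ x : ℝ, ‖f x‖ ^ 2 := by
    rw [integral_pos_iff_support_of_nonneg (fun x => by positivity) IA]
    have hsupp : Function.support (fun x : ℝ => ‖f x‖ ^ 2) = {x : ℝ | f x ≠ 0} := by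
      ext x; simp [Function.mem_support, pow_eq_zero_iff]
    rw [hsupp]
    exact hUopen.measure_pos volume ⟨x₀, hx₀⟩
  have hx₁ : ∃ x : ℝ, x ≠ 0 ∧ f x ≠ 0 := by
    by_cases h0 : x₀ = 0
    · rcases Metric.isOpen_iff.mp hUopen x₀ hx₀ with ⟨ε, hε, hball⟩
      refine ⟨ε / 2, by positivity, hball ?_⟩
      rw [Metric.mem_ball, h0, Real.dist_eq, sub_zero, abs_of_pos (by positivity)]
      linarith
    · exact ⟨x₀, h0, hx₀⟩
  have hB2 : 0 < ∫ x : ℝ, ‖(x : ℂ) * f x‖ ^ 2 := by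
    rw [integral_pos_iff_support_of_nonneg (fun x => by positivity) IB]
    have hsupp : Function.support (fun x : ℝ => ‖(x : ℂ) * f x‖ ^ 2) ⊇
        {x : ℝ | f x ≠ 0} ∩ {(0:ℝ)}ᶜ := by
      intro x hx
      rcases hx with ⟨hfx, hx0⟩
      simp only [Function.mem_support, hnorm x]
      have h1 : |x| ≠ 0 := abs_ne_zero.mpr hx0
      have h2 : ‖f x‖ ≠ 0 := norm_ne_zero_iff.mpr hfx
      exact pow_ne_zero 2 (mul_ne_zero h1 h2)
    obtain ⟨x₁, hx₁0, hfx₁⟩ := hx₁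
    refine lt_of_lt_of_le ?_ (measure_mono hsupp)
    exact (hUopen.inter isOpen_compl_singleton).measure_pos volume ⟨x₁, hfx₁, hx₁0⟩
  set A : ℝ := (∫ x : ℝ, ‖f x‖ ^ 2) ^ ((1:ℝ)/2) with hA_def
  set B : ℝ := (∫ x : ℝ, ‖(x : ℂ) * f x‖ ^ 2) ^ ((1:ℝ)/2) with hB_def
  have hApos : 0 < A := Real.rpow_pos_of_pos hA2 _
  have hBpos : 0 < B := Real.rpow_pos_of_pos hB2 _
  set R : ℝ := B / A with hR_def
  have hR : 0 < R := div_pos hBpos hApos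
  set S : Set ℝ := Set.Icc (-R) R with hS_def
  have hSmeas : MeasurableSet S := measurableSet_Icc
  haveI : IsFiniteMeasure (volume.restrict S) :=
    ⟨by rw [Measure.restrict_apply_univ]; exact measure_Icc_lt_top⟩
  -- integrability of the full integrand
  have hwcont : Continuous (fun x : ℝ => |x| ^ (2*ρ)) :=
    continuous_abs.rpow_const (fun x => Or.inr (by positivity))
  have hInt : Integrable (fun x : ℝ => |x| ^ (2*ρ) * ‖f x‖) := by
    apply Integrable.mono' ((f.integrable (μ := volume)).norm.add
      (f.integrable_pow_mul volume 1))
      (hwcont.mul f.continuous.norm).aestronglyMeasurable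
    refine Filter.Eventually.of_forall fun x => ?_
    simp only [Pi.pow_apply, Pi.mul_apply]
    rw [Real.norm_eq_abs, abs_of_nonneg (by positivity)]
    have hb : |x| ^ (2*ρ) ≤ 1 + |x| := by
      rcases le_or_gt (|x|) 1 with h | h
      · have h1 : |x| ^ (2*ρ) ≤ 1 := Real.rpow_le_one (abs_nonneg x) h (by positivity)
        linarith [abs_nonneg x]
      · have h2 : |x| ^ (2*ρ) ≤ |x| ^ (1:ℝ) :=
          Real.rpow_le_rpow_of_exponent_le h.le (by linarith)
        rw [Real.rpow_one] at h2
        linarith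
    calc |x| ^ (2*ρ) * ‖f x‖ ≤ (1 + |x|) * ‖f x‖ :=
          mul_le_mul_of_nonneg_right hb (norm_nonneg _)
      _ = ‖f x‖ + ‖x‖ ^ 1 * ‖f x‖ := by rw [Real.norm_eq_abs]; ring
  -- L² memberships
  have hgM : MemLp (fun x : ℝ => ‖f x‖) 2 volume :=
    (memLp_two_iff_integrable_sq f.continuous.norm.aestronglyMeasurable).mpr IA
  have hg2M : MemLp (fun x : ℝ => |x| * ‖f x‖) 2 volume :=
    (memLp_two_iff_integrable_sq
      (continuous_abs.mul f.continuous.norm).aestronglyMeasurable).mpr IB'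
  have hw1M : MemLp (fun x : ℝ => |x| ^ (2*ρ)) 2 (volume.restrict S) := by
    apply MemLp.of_bound hwcont.aestronglyMeasurable (R ^ (2*ρ))
    filter_upwards [ae_restrict_mem hSmeas] with x hx
    rw [Real.norm_eq_abs, abs_of_nonneg (by positivity)]
    rw [hS_def, Set.mem_Icc] at hx
    exact Real.rpow_le_rpow (abs_nonneg x) (abs_le.mpr hx) (by positivity)
  have hout : ∀ x ∈ Sᶜ, R < |x| := by
    intro x hx
    rw [hS_def, Set.mem_compl_iff, Set.mem_Icc, not_and_or, not_le, not_le] at hx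
    rcases hx with h | h
    · exact lt_abs.mpr (Or.inr (by linarith))
    · exact lt_abs.mpr (Or.inl h)
  have hcontOn : ContinuousOn (fun x : ℝ => |x| ^ (2*ρ-1)) Sᶜ := by
    intro x hx
    have hxne : |x| ≠ 0 := ((hR.trans (hout x hx)).ne')
    exact ((Real.continuousAt_rpow_const (|x|) (2*ρ-1) (Or.inl hxne)).comp
      continuous_abs.continuousAt).continuousWithinAt
  have hw2M : MemLp (fun x : ℝ => |x| ^ (2*ρ-1)) 2 (volume.restrict Sᶜ) := by
    apply (memLp_two_iff_integrable_sq
      (hcontOn.aestronglyMeasurable hSmeas.compl)).mpr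
    have heq : (fun x : ℝ => (|x| ^ (2*ρ-1)) ^ 2) = fun x : ℝ => |x| ^ (4*ρ-2) := by
      funext x
      rw [sq_rpow _ _ (abs_nonneg x), show 2*(2*ρ-1) = 4*ρ-2 by ring]
    rw [heq]
    exact tail_integrable (by linarith) hR
  -- split the integral
  have hsplit : (∫ x : ℝ, |x| ^ (2*ρ) * ‖f x‖) =
      (∫ x in S, |x| ^ (2*ρ) * ‖f x‖) + ∫ x in Sᶜ, |x| ^ (2*ρ) * ‖f x‖ :=
    (integral_add_compl hSmeas hInt).symm
  -- piece 1
  have p1 : (∫ x in S, |x| ^ (2*ρ) * ‖f x‖) ≤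
      (∫ x in S, (|x| ^ (2*ρ)) ^ 2) ^ ((1:ℝ)/2) * (∫ x in S, ‖f x‖ ^ 2) ^ ((1:ℝ)/2) :=
    cauchy_schwarz_int (fun x => by positivity) (fun x => norm_nonneg _) hw1M (hgM.restrict S)
  have e1 : (∫ x in S, (|x| ^ (2*ρ)) ^ 2) = ∫ x in S, |x| ^ (4*ρ) := by
    congr 1 with x
    rw [sq_rpow _ _ (abs_nonneg x), show 2*(2*ρ) = 4*ρ by ring]
  have hhead : (∫ x in S, |x| ^ (4*ρ)) ≤ 2 * R ^ (4*ρ+1) :=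
    head_integral_le (by positivity) hR
  have hAset : (∫ x in S, ‖f x‖ ^ 2) ≤ ∫ x : ℝ, ‖f x‖ ^ 2 :=
    setIntegral_le_integral IA (Filter.Eventually.of_forall fun x => by positivity)
  have p1' : (∫ x in S, |x| ^ (2*ρ) * ‖f x‖) ≤
      (2 * R ^ (4*ρ+1)) ^ ((1:ℝ)/2) * A := by
    refine p1.trans (mul_le_mul ?_ ?_ (Real.rpow_nonneg ?_ _) (Real.rpow_nonneg (by positivity) _))
    · rw [e1]
      exact Real.rpow_le_rpow (setIntegral_nonneg hSmeas fun x _ => by positivity) hhead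
        (by norm_num)
    · exact Real.rpow_le_rpow (setIntegral_nonneg hSmeas fun x _ => by positivity) hAset
        (by norm_num)
    · exact setIntegral_nonneg hSmeas fun x _ => by positivity
  -- piece 2
  have h2eq : (∫ x in Sᶜ, |x| ^ (2*ρ) * ‖f x‖) =
      ∫ x in Sᶜ, |x| ^ (2*ρ-1) * (|x| * ‖f x‖) := by
    apply setIntegral_congr_fun hSmeas.compl
    intro x hx
    have hxne : |x| ≠ 0 := ((hR.trans (hout x hx)).ne')
    show |x| ^ (2*ρ) * ‖f x‖ = |x| ^ (2*ρ-1) * (|x| * ‖f x‖)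
    rw [← mul_assoc, ← Real.rpow_add_one hxne (2*ρ-1), show 2*ρ-1+1 = 2*ρ by ring]
  have p2 : (∫ x in Sᶜ, |x| ^ (2*ρ-1) * (|x| * ‖f x‖)) ≤
      (∫ x in Sᶜ, (|x| ^ (2*ρ-1)) ^ 2) ^ ((1:ℝ)/2) *
        (∫ x in Sᶜ, (|x| * ‖f x‖) ^ 2) ^ ((1:ℝ)/2) :=
    cauchy_schwarz_int (fun x => Real.rpow_nonneg (abs_nonneg x) _)
      (fun x => mul_nonneg (abs_nonneg x) (norm_nonneg _)) hw2M (hg2M.restrict Sᶜ)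
  have e2 : (∫ x in Sᶜ, (|x| ^ (2*ρ-1)) ^ 2) = 2 * (R ^ (4*ρ-1) / (1-4*ρ)) := by
    have heq : (fun x : ℝ => (|x| ^ (2*ρ-1)) ^ 2) = fun x : ℝ => |x| ^ (4*ρ-2) := by
      funext x
      rw [sq_rpow _ _ (abs_nonneg x), show 2*(2*ρ-1) = 4*ρ-2 by ring]
    calc (∫ x in Sᶜ, (|x| ^ (2*ρ-1)) ^ 2) = ∫ x in Sᶜ, |x| ^ (4*ρ-2) := by rw [heq]
      _ = 2 * (R ^ ((4*ρ-2) + 1) / -((4*ρ-2) + 1)) := tail_integral (by linarith) hR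
      _ = 2 * (R ^ (4*ρ-1) / (1-4*ρ)) := by rw [show (4*ρ-2) + 1 = 4*ρ-1 by ring]; ring_nf
  have hBset : (∫ x in Sᶜ, (|x| * ‖f x‖) ^ 2) ≤ ∫ x : ℝ, ‖(x : ℂ) * f x‖ ^ 2 := by
    calc (∫ x in Sᶜ, (|x| * ‖f x‖) ^ 2) ≤ ∫ x : ℝ, (|x| * ‖f x‖) ^ 2 :=
          setIntegral_le_integral IB' (Filter.Eventually.of_forall fun x => by positivity)
      _ = ∫ x : ℝ, ‖(x : ℂ) * f x‖ ^ 2 := by simp only [hnorm]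
  have p2' : (∫ x in Sᶜ, |x| ^ (2*ρ) * ‖f x‖) ≤
      (2 * (R ^ (4*ρ-1) / (1-4*ρ))) ^ ((1:ℝ)/2) * B := by
    rw [h2eq]
    refine p2.trans (mul_le_mul ?_ ?_ (Real.rpow_nonneg ?_ _) (Real.rpow_nonneg ?_ _))
    · rw [e2]
    · exact Real.rpow_le_rpow (setIntegral_nonneg hSmeas.compl fun x _ => by positivity)
        hBset (by norm_num)
    · exact setIntegral_nonneg hSmeas.compl fun x _ => by positivity
    · exact le_of_lt (mul_pos two_pos (div_pos (Real.rpow_pos_of_pos hR _) (by linarith)))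
  -- rpow algebra for the two bounds
  have h14 : (0:ℝ) < 1 - 4*ρ := by linarith
  have hAe : (0:ℝ) < A ^ ((1:ℝ)/2 + 2*ρ) := Real.rpow_pos_of_pos hApos _
  have hAe' : (0:ℝ) < A ^ (2*ρ - (1:ℝ)/2) := Real.rpow_pos_of_pos hApos _
  have core1 : R ^ ((1:ℝ)/2 + 2*ρ) * A = A ^ ((1:ℝ)/2 - 2*ρ) * B ^ ((1:ℝ)/2 + 2*ρ) := by
    rw [hR_def, Real.div_rpow hBpos.le hApos.le, div_mul_eq_mul_div, div_eq_iff hAe.ne',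
      show A ^ ((1:ℝ)/2 - 2*ρ) * B ^ ((1:ℝ)/2 + 2*ρ) * A ^ ((1:ℝ)/2 + 2*ρ) =
        B ^ ((1:ℝ)/2 + 2*ρ) * (A ^ ((1:ℝ)/2 - 2*ρ) * A ^ ((1:ℝ)/2 + 2*ρ)) by ring,
      ← Real.rpow_add hApos, show (1:ℝ)/2 - 2*ρ + ((1:ℝ)/2 + 2*ρ) = 1 by ring, Real.rpow_one]
  have core2 : R ^ (2*ρ - (1:ℝ)/2) * B = A ^ ((1:ℝ)/2 - 2*ρ) * B ^ ((1:ℝ)/2 + 2*ρ) := by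
    rw [hR_def, Real.div_rpow hBpos.le hApos.le, div_mul_eq_mul_div, div_eq_iff hAe'.ne',
      show A ^ ((1:ℝ)/2 - 2*ρ) * B ^ ((1:ℝ)/2 + 2*ρ) * A ^ (2*ρ - (1:ℝ)/2) =
        B ^ ((1:ℝ)/2 + 2*ρ) * (A ^ ((1:ℝ)/2 - 2*ρ) * A ^ (2*ρ - (1:ℝ)/2)) by ring,
      ← Real.rpow_add hApos, show (1:ℝ)/2 - 2*ρ + (2*ρ - (1:ℝ)/2) = 0 by ring,
      Real.rpow_zero, mul_one,
      show B ^ (2*ρ - (1:ℝ)/2) * B = B ^ (2*ρ - (1:ℝ)/2) * B ^ (1:ℝ) by rw [Real.rpow_one],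
      ← Real.rpow_add hBpos, show 2*ρ - (1:ℝ)/2 + 1 = (1:ℝ)/2 + 2*ρ by ring]
  have key1 : (2 * R ^ (4*ρ+1)) ^ ((1:ℝ)/2) * A =
      (2:ℝ) ^ ((1:ℝ)/2) * (A ^ ((1:ℝ)/2 - 2*ρ) * B ^ ((1:ℝ)/2 + 2*ρ)) := by
    rw [Real.mul_rpow (by norm_num : (0:ℝ) ≤ 2) (Real.rpow_nonneg hR.le _),
      ← Real.rpow_mul hR.le, show (4*ρ+1) * ((1:ℝ)/2) = (1:ℝ)/2 + 2*ρ by ring,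
      mul_assoc, core1]
  have key2 : (2 * (R ^ (4*ρ-1) / (1-4*ρ))) ^ ((1:ℝ)/2) * B =
      (2 / (1-4*ρ)) ^ ((1:ℝ)/2) * (A ^ ((1:ℝ)/2 - 2*ρ) * B ^ ((1:ℝ)/2 + 2*ρ)) := by
    rw [show 2 * (R ^ (4*ρ-1) / (1-4*ρ)) = (2 / (1-4*ρ)) * R ^ (4*ρ-1) by ring,
      Real.mul_rpow (by positivity) (Real.rpow_nonneg hR.le _),
      ← Real.rpow_mul hR.le, show (4*ρ-1) * ((1:ℝ)/2) = 2*ρ - (1:ℝ)/2 by ring,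
      mul_assoc, core2]
  rw [hsplit]
  calc (∫ x in S, |x| ^ (2*ρ) * ‖f x‖) + ∫ x in Sᶜ, |x| ^ (2*ρ) * ‖f x‖ ≤
        (2 * R ^ (4*ρ+1)) ^ ((1:ℝ)/2) * A + (2 * (R ^ (4*ρ-1) / (1-4*ρ))) ^ ((1:ℝ)/2) * B :=
        add_le_add p1' p2'
    _ = ((2:ℝ) ^ ((1:ℝ)/2) + (2 / (1 - 4*ρ)) ^ ((1:ℝ)/2)) *
        A ^ ((1:ℝ)/2 - 2*ρ) * B ^ ((1:ℝ)/2 + 2*ρ) := by rw [key1, key2]; ring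


theorem weighted_L1_interpolation (ρ : ℝ) (hρ0 : 0 ≤ ρ) (hρ1 : ρ < 1 / 4) :
    ∃ C > (0 : ℝ), ∀ f : SchwartzMap ℝ ℂ,
      (∫ x : ℝ, |x| ^ (2 * ρ) * ‖f x‖) ≤
        C * ((∫ x : ℝ, ‖f x‖ ^ 2) ^ ((1 : ℝ) / 2)) ^ ((1 : ℝ) / 2 - 2 * ρ) *
          ((∫ x : ℝ, ‖(x : ℂ) * f x‖ ^ 2) ^ ((1 : ℝ) / 2)) ^ ((1 : ℝ) / 2 + 2 * ρ) := by
  have h14 : (0:ℝ) < 1 - 4*ρ := by linarith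
  refine ⟨(2:ℝ) ^ ((1:ℝ)/2) + (2 / (1 - 4*ρ)) ^ ((1:ℝ)/2), by positivity, fun f => ?_⟩
  by_cases hf0 : ∃ x : ℝ, f x ≠ 0
  · exact weighted_L1_interpolation_aux ρ hρ0 hρ1 f hf0
  · push_neg at hf0
    have h1 : (fun x : ℝ => |x| ^ (2*ρ) * ‖f x‖) = fun _ : ℝ => (0:ℝ) := by
      funext x; rw [hf0 x]; simp
    have h2 : (fun x : ℝ => ‖f x‖ ^ 2) = fun _ : ℝ => (0:ℝ) := by
      funext x; rw [hf0 x]; simp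
    rw [h1, h2, integral_zero,
      Real.zero_rpow (by norm_num : (1:ℝ)/2 ≠ 0),
      Real.zero_rpow (by intro h; rw [sub_eq_zero] at h; linarith [h.symm] : (1:ℝ)/2 - 2*ρ ≠ 0)]
    simp
end
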